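/- An algebra (A; ∧, d), with ∧ binary and d ternary, satisfies the twelve identities: x∧x = x; d(x,x,x) = x; (x∧y)∧(y∧x) = y∧x; (x∧(y∧z))∧((x∧y)∧z) = (x∧y)∧z; ((x∧y)∧z)∧(x∧(y∧z)) = x∧(y∧z); d(x∧y, y∧x, y∧x) = x∧y; d(y∧x, y∧x, x∧y) = x∧y; ((x∧y)∧z)∧d(x,y,z) = d(x,y,z); d(x,y,z)∧((x∧y)∧z) = (x∧y)∧z; x∧(x∧y) = x∧y; x∧(y∧x) = y∧x; d(x,y,z) = d((y∧z)∧x, (x∧z)∧y, (x∧y)∧z); and (x∧y)∧y = x∧y, if and only if there exists an equivalence relation ~ on A such that (A; ∧, d) is a regular SMB algebra over ~; moreover, in that case ~ is given by: x ~ y iff x∧y = y and y∧x = x. -/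

import Mathlib

/-- An equivalence relation on `A` compatible with the binary operation `m`
and the ternary operation `d`, i.e. a congruence of the algebra `(A; m, d)`. -/
structure IsCongruence {A : Type*} (m : A → A → A) (d : A → A → A → A)
    (θ : A → A → Prop) : Prop where
  equiv : Equivalence θ
  compat_m : ∀ {a a' b b'}, θ a a' → θ b b' → θ (m a b) (m a' b')
  compat_d : ∀ {a a' b b' c c'}, θ a a' → θ b b' → θ c c' → θ (d a b c) (d a' b' c')

/-- `(A; m, d)` is an SMB algebra over the congruence `r`. -/
structure IsSMB {A : Type*} (m : A → A → A) (d : A → A → A → A)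
    (r : A → A → Prop) : Prop where
  cong : IsCongruence m d r
  idem_m : ∀ x, m x x = x
  idem_d : ∀ x, d x x x = x
  comm : ∀ x y, r (m x y) (m y x)
  assoc : ∀ x y z, r (m (m x y) z) (m x (m y z))
  proj : ∀ a b, r a b → m a b = b
  mal_left : ∀ a b, r a b → d a b b = a
  mal_right : ∀ a b, r a b → d b b a = a

/-- `(A; m, d)` is a regular SMB algebra over the congruence `r`. -/
structure IsRegularSMB {A : Type*} (m : A → A → A) (d : A → A → A → A)
    (r : A → A → Prop) : Prop where
  smb : IsSMB m d r
  reg1 : ∀ a b c, r (d a b c) (m (m a b) c)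
  reg2 : ∀ a b, r (m a b) b → m a b = b
  reg3 : ∀ x y z, d x y z = d (m (m y z) x) (m (m x z) y) (m (m x y) z)
  reg4 : ∀ x y, m (m x y) y = m x y

/-- The principal congruence generated by the pair `(a, b)`: the smallest
congruence of `(A; m, d)` containing `(a, b)`. -/
def Cg {A : Type*} (m : A → A → A) (d : A → A → A → A) (a b : A) : A → A → Prop :=
  fun x y => ∀ θ : A → A → Prop, IsCongruence m d θ → θ a b → θ x y

/-- The join of two congruences: the smallest congruence of `(A; m, d)`
containing both `ρ` and `σ`. -/
def congJoin {A : Type*} (m : A → A → A) (d : A → A → A → A)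
    (ρ σ : A → A → Prop) : A → A → Prop :=
  fun x y => ∀ θ : A → A → Prop, IsCongruence m d θ →
    (∀ u v, ρ u v → θ u v) → (∀ u v, σ u v → θ u v) → θ x y


private theorem smb_trans_aux {A : Type*} {m : A → A → A}
    (h4 : ∀ x y z, m (m x (m y z)) (m (m x y) z) = m (m x y) z)
    (h13 : ∀ x y, m (m x y) y = m x y)
    {x y z : A} (hxy : m x y = y) (hyz : m y z = z) : m x z = z := by
  have e := h4 x y z
  rw [hyz, hxy, hyz] at e
  rw [h13 x z] at e
  exact e

private theorem smb_compat_left {A : Type*} {m : A → A → A}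
    (h4 : ∀ x y z, m (m x (m y z)) (m (m x y) z) = m (m x y) z)
    (h5 : ∀ x y z, m (m (m x y) z) (m x (m y z)) = m x (m y z))
    (h11 : ∀ x y, m x (m y x) = m y x)
    (h13 : ∀ x y, m (m x y) y = m x y)
    {a b : A} (c : A) (hab : m a b = b) :
    m (m a c) (m b c) = m b c := by
  have e1 := h11 c b
  have e2 := h13 (m a c) (m b c)
  have e3 := h13 a (m b c)
  have e4 := h4 a b c
  have e5 := h5 a c (m b c)
  grind

private theorem smb_compat_right {A : Type*} {m : A → A → A}
    (h4 : ∀ x y z, m (m x (m y z)) (m (m x y) z) = m (m x y) z)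
    (h5 : ∀ x y z, m (m (m x y) z) (m x (m y z)) = m x (m y z))
    (h11 : ∀ x y, m x (m y x) = m y x)
    (h13 : ∀ x y, m (m x y) y = m x y)
    (a : A) {b p : A} (hbp : m b p = p) :
    m (m a b) (m a p) = m a p := by
  have e1 := h11 p a
  have e2 := h13 (m a b) (m a p)
  have e3 := h4 (m a b) p (m a p)
  have e4 := h5 a b p
  grind

/-- An algebra `(A; ∧, d)` satisfies the listed identities iff it is a regular
SMB algebra over some equivalence relation `~`; moreover, in that case `~` is
given by `x ~ y ↔ x∧y = y ∧ y∧x = x`. -/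
theorem regular_smb_equational_base {A : Type*} (m : A → A → A)
    (d : A → A → A → A) :
    ((∀ x, m x x = x) ∧
     (∀ x, d x x x = x) ∧
     (∀ x y, m (m x y) (m y x) = m y x) ∧
     (∀ x y z, m (m x (m y z)) (m (m x y) z) = m (m x y) z) ∧
     (∀ x y z, m (m (m x y) z) (m x (m y z)) = m x (m y z)) ∧
     (∀ x y, d (m x y) (m y x) (m y x) = m x y) ∧
     (∀ x y, d (m y x) (m y x) (m x y) = m x y) ∧
     (∀ x y z, m (m (m x y) z) (d x y z) = d x y z) ∧
     (∀ x y z, m (d x y z) (m (m x y) z) = m (m x y) z) ∧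
     (∀ x y, m x (m x y) = m x y) ∧
     (∀ x y, m x (m y x) = m y x) ∧
     (∀ x y z, d x y z = d (m (m y z) x) (m (m x z) y) (m (m x y) z)) ∧
     (∀ x y, m (m x y) y = m x y)) ↔
    (∃ r : A → A → Prop, IsRegularSMB m d r ∧
      ∀ x y, r x y ↔ (m x y = y ∧ m y x = x)) := by
  constructor
  · rintro ⟨h1, h2, h3, h4, h5, h6, h7, h8, h9, h10, h11, h12, h13⟩
    set r : A → A → Prop := fun x y => m x y = y ∧ m y x = x with hr
    have rrefl : ∀ x, r x x := fun x => ⟨h1 x, h1 x⟩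
    have rsymm : ∀ {x y}, r x y → r y x := fun h => ⟨h.2, h.1⟩
    have rtrans : ∀ {x y z}, r x y → r y z → r x z := by
      intro x y z hxy hyz
      exact ⟨smb_trans_aux h4 h13 hxy.1 hyz.1, smb_trans_aux h4 h13 hyz.2 hxy.2⟩
    have rcompat_m : ∀ {a a' b b'}, r a a' → r b b' → r (m a b) (m a' b') := by
      intro a a' b b' ha hb
      have s1 : r (m a b) (m a' b) :=
        ⟨smb_compat_left h4 h5 h11 h13 b ha.1, smb_compat_left h4 h5 h11 h13 b ha.2⟩
      have s2 : r (m a' b) (m a' b') :=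
        ⟨smb_compat_right h4 h5 h11 h13 a' hb.1, smb_compat_right h4 h5 h11 h13 a' hb.2⟩
      exact rtrans s1 s2
    have rreg1 : ∀ a b c, r (d a b c) (m (m a b) c) := fun a b c => ⟨h9 a b c, h8 a b c⟩
    have rcompat_d : ∀ {a a' b b' c c'}, r a a' → r b b' → r c c' →
        r (d a b c) (d a' b' c') := by
      intro a a' b b' c c' ha hb hc
      exact rtrans (rreg1 a b c)
        (rtrans (rcompat_m (rcompat_m ha hb) hc) (rsymm (rreg1 a' b' c')))
    refine ⟨r, ⟨⟨⟨⟨rrefl, rsymm, rtrans⟩, rcompat_m, rcompat_d⟩, h1, h2, ?_, ?_, ?_, ?_, ?_⟩,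
      rreg1, ?_, h12, h13⟩, fun x y => Iff.rfl⟩
    · exact fun x y => ⟨h3 x y, h3 y x⟩
    · exact fun x y z => ⟨h5 x y z, h4 x y z⟩
    · exact fun a b h => h.1
    · intro a b hab
      have e := h6 b a
      rw [hab.1, hab.2] at e
      exact e
    · intro a b hab
      have e := h7 b a
      rw [hab.1, hab.2] at e
      exact e
    · intro a b h
      have e := h.1
      rwa [h13 a b] at e
  · rintro ⟨r, hreg, hchar⟩
    have S := hreg.smb
    have E := S.cong.equiv
    have abs : ∀ x y, r (m x (m x y)) (m x y) := by
      intro x y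
      have e := E.symm (S.assoc x x y)
      rwa [S.idem_m x] at e
    refine ⟨S.idem_m, S.idem_d, fun x y => S.proj _ _ (S.comm x y),
      fun x y z => S.proj _ _ (E.symm (S.assoc x y z)),
      fun x y z => S.proj _ _ (S.assoc x y z),
      fun x y => S.mal_left _ _ (S.comm x y),
      fun x y => S.mal_right _ _ (S.comm x y),
      fun x y z => S.proj _ _ (E.symm (hreg.reg1 x y z)),
      fun x y z => S.proj _ _ (hreg.reg1 x y z),
      fun x y => hreg.reg2 x (m x y) (abs x y),
      ?_, hreg.reg3, hreg.reg4⟩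
    intro x y
    refine hreg.reg2 x (m y x) ?_
    have c1 : r (m x (m y x)) (m (m x y) x) := E.symm (S.assoc x y x)
    have c2 : r (m (m x y) x) (m x (m x y)) := S.comm (m x y) x
    have c4 : r (m x y) (m y x) := S.comm x y
    exact E.trans c1 (E.trans c2 (E.trans (abs x y) c4))
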